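/- arXiv:1811.08372 — 5 statements merged into one kernel-verified Lean document; each statement's English description precedes it below -/
import Mathlib

section
/- Let H be a directed acyclic hypergraph on a finite vertex set V with chain components {τ : τ ∈ D}. Let G be the directed graph whose vertex set is D and which has an edge τ_i → τ_j exactly when τ_i ≠ τ_j and there exists a hyperedge h of H with T(h) ∩ τ_i ≠ ∅ and H(h) ∩ τ_j ≠ ∅. Then G is a directed acyclic graph: no hyperedge of H has both its tail and its head meeting the same chain component (so G has no self-loops), and G contains no directed cycle. -/
namespace BH

variable {V : Type*}

/-- The edge set of a directed hypergraph on vertex set `V`: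
each hyperedge is an ordered pair `(tail, head)` of subsets of `V`. -/
abbrev HEdges (V : Type*) := Set (Set V × Set V)

/-- Every hyperedge has disjoint tail and head. -/
def HDisjoint (E : HEdges V) : Prop := ∀ h ∈ E, Disjoint h.1 h.2

/-- `u` is a parent of `v` in the directed hypergraph. -/
def hPar (E : HEdges V) (u v : V) : Prop := ∃ h ∈ E, u ∈ h.1 ∧ v ∈ h.2

/-- `u` and `v` are neighbors (co-head) in the directed hypergraph. -/
def hNbr (E : HEdges V) (u v : V) : Prop := ∃ h ∈ E, u ∈ h.2 ∧ v ∈ h.2 ∧ u ≠ v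

/-- A partially directed cycle with respect to a neighbor relation `nbr` and a
parent relation `par`: a cyclic sequence `v_1, …, v_k, v_{k+1} = v_1` in which every
step is a neighbor-or-parent step and at least one step is a parent step. -/
def PDCycle (nbr par : V → V → Prop) : Prop :=
  ∃ (n : ℕ) (f : ZMod (n + 1) → V),
    (∀ i, nbr (f i) (f (i + 1)) ∨ par (f i) (f (i + 1))) ∧
    (∃ i, par (f i) (f (i + 1)))

/-- A directed hypergraph is acyclic if it has no partially directed cycle. -/
def HAcyclic (E : HEdges V) : Prop := ¬ PDCycle (hNbr E) (hPar E)

/-- Graph notions: a graph on `V` is a set of ordered pairs.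
`u` is a parent of `v` if `(u,v)` is a directed edge. -/
def gPar (E : Set (V × V)) (u v : V) : Prop := (u, v) ∈ E ∧ (v, u) ∉ E

/-- `u` and `v` are neighbors if `(u,v)` is an undirected edge. -/
def gNbr (E : Set (V × V)) (u v : V) : Prop := (u, v) ∈ E ∧ (v, u) ∈ E

/-- A chain graph is a graph with no partially directed cycle. -/
def IsChainGraph (E : Set (V × V)) : Prop := ¬ PDCycle (gNbr E) (gPar E)

/-- The shadow of a directed hypergraph: for every hyperedge `(X,Y)`, any two
distinct vertices of `Y` are joined by an undirected edge and there is a directed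
edge from every vertex of `X` to every vertex of `Y`. -/
def shadow (E : HEdges V) : Set (V × V) :=
  {p | ∃ h ∈ E, (p.1 ∈ h.2 ∧ p.2 ∈ h.2 ∧ p.1 ≠ p.2) ∨ (p.1 ∈ h.1 ∧ p.2 ∈ h.2)}

/-- Chain component of `v` in a directed hypergraph: reflexive-transitive closure
of the co-head relation. -/
def hComp (E : HEdges V) (v : V) : Set V := {u | Relation.ReflTransGen (hNbr E) v u}

/-- The set of chain components of a directed hypergraph. -/
def hComps (E : HEdges V) : Set (Set V) := {S | ∃ v, S = hComp E v}

/-- Chain component of `v` in a graph: vertices joined to `v` by undirected paths. -/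
def gComp (E : Set (V × V)) (v : V) : Set V := {u | Relation.ReflTransGen (gNbr E) v u}

/-- The set of chain components of a graph. -/
def gComps (E : Set (V × V)) : Set (Set V) := {S | ∃ v, S = gComp E v}

/-- Parent set of a vertex in a hypergraph. -/
def hPaSet (E : HEdges V) (v : V) : Set V := {u | hPar E u v}

/-- Neighbor set of a vertex in a hypergraph. -/
def hNbSet (E : HEdges V) (v : V) : Set V := {u | hNbr E u v}

/-- Parent set of a vertex in a graph. -/
def gPaSet (E : Set (V × V)) (v : V) : Set V := {u | gPar E u v}

/-- Neighbor set of a vertex in a graph. -/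
def gNbSet (E : Set (V × V)) (v : V) : Set V := {u | gNbr E u v}

/-- `pa(τ)` for a vertex set `τ` in a graph. -/
def gPaTau (E : Set (V × V)) (τ : Set V) : Set V := (⋃ v ∈ τ, gPaSet E v) \ τ

/-- `bd(τ)` for a vertex set `τ` in a graph. -/
def gBd (E : Set (V × V)) (τ : Set V) : Set V := (⋃ v ∈ τ, gPaSet E v ∪ gNbSet E v) \ τ

/-- `cl(τ) = bd(τ) ∪ τ`. -/
def gCl (E : Set (V × V)) (τ : Set V) : Set V := gBd E τ ∪ τ

/-- `pa(τ)` for a vertex set `τ` in a hypergraph. -/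
def hPaTau (E : HEdges V) (τ : Set V) : Set V := (⋃ v ∈ τ, hPaSet E v) \ τ

/-- Induced subgraph on a vertex set. -/
def gInduced (E : Set (V × V)) (A : Set V) : Set (V × V) := {p ∈ E | p.1 ∈ A ∧ p.2 ∈ A}

/-- Induced sub-hypergraph on a vertex set. -/
def hInduced (E : HEdges V) (A : Set V) : HEdges V := {h ∈ E | h.1 ∪ h.2 ⊆ A}

/-- Anterior set of `S` with respect to neighbor/parent relations: all vertices with
a neighbor-or-parent-step path to some vertex of `S` (including `S` itself). -/
def antOf (nbr par : V → V → Prop) (S : Set V) : Set V :=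
  {w | ∃ s ∈ S, Relation.ReflTransGen (fun a b => nbr a b ∨ par a b) w s}

/-- Anterior set in a graph. -/
def gAnt (E : Set (V × V)) (S : Set V) : Set V := antOf (gNbr E) (gPar E) S

/-- Anterior set in a hypergraph. -/
def hAnt (E : HEdges V) (S : Set V) : Set V := antOf (hNbr E) (hPar E) S

/-- The moral graph of a graph: its underlying undirected graph with all pairs of
distinct vertices inside `bd(τ)` joined, for every chain component `τ`. -/
def moral (E : Set (V × V)) : Set (V × V) :=
  {p | (p.1, p.2) ∈ E ∨ (p.2, p.1) ∈ E ∨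
    ∃ τ ∈ gComps E, p.1 ∈ gBd E τ ∧ p.2 ∈ gBd E τ ∧ p.1 ≠ p.2}

/-- `K` is a clique with respect to the (symmetric) pair set `U`. -/
def IsCliqueIn (U : Set (V × V)) (K : Set V) : Prop :=
  ∀ u ∈ K, ∀ v ∈ K, u ≠ v → (u, v) ∈ U

/-- `K` is a maximal clique of `U` inside the vertex set `S`. -/
def IsMaxCliqueWithin (U : Set (V × V)) (S K : Set V) : Prop :=
  K.Nonempty ∧ K ⊆ S ∧ IsCliqueIn U K ∧
    ∀ K', K ⊆ K' → K' ⊆ S → IsCliqueIn U K' → K' = K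

/-- The maximal cliques of the pair set `U`. -/
def maxCliques (U : Set (V × V)) : Set (Set V) :=
  {K | IsMaxCliqueWithin U Set.univ K}

/-- The undirected part of a graph, as a set of pairs. -/
def uPart (E : Set (V × V)) : Set (V × V) := {p | gNbr E p.1 p.2}

/-- The set of children of a vertex in a graph. -/
def children (E : Set (V × V)) (v : V) : Set V := {w | gPar E v w}

/-- Phase I, first stage of the canonical LWF DAH construction: for each vertex `v`
with children set `S_v`, the hyperedge `({v}, K)` for every maximal clique `K` of the
undirected part of `G[S_v]`. -/
def phase1a (E : Set (V × V)) : HEdges V :=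
  {h | ∃ v K, IsMaxCliqueWithin (uPart E) (children E v) K ∧ h = ({v}, K)}

/-- Phase I of the canonical LWF DAH construction. -/
def phase1 (E : Set (V × V)) : HEdges V :=
  phase1a E ∪
    {h | ∃ K, IsMaxCliqueWithin (uPart E) Set.univ K ∧
      (∀ h' ∈ phase1a E, ¬ K ⊆ h'.2) ∧ h = (∅, K)}

/-- The Phase-I hyperedges lying inside `cl(τ)` whose head meets `τ`. -/
def HstarI (E : Set (V × V)) (τ : Set V) : HEdges V :=
  {h ∈ phase1 E | h.1 ∪ h.2 ⊆ gCl E τ ∧ (h.2 ∩ τ).Nonempty}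

/-- The canonical LWF DAH of a chain graph (its set of hyperedges): for every chain
component `τ` and every nonempty family `F ⊆ H*_τ` with `B = ⋂_{h ∈ F} H(h)`, the
hyperedge `(⋃ {T(h) : h ∈ H*_τ, B ⊆ H(h)}, B)`. -/
def canonicalLWF (E : Set (V × V)) : HEdges V :=
  {e | ∃ τ ∈ gComps E, ∃ F, F ⊆ HstarI E τ ∧ F.Nonempty ∧
    e.2 = {x | ∀ g ∈ F, x ∈ g.2} ∧
    e.1 = {x | ∃ h ∈ HstarI E τ, e.2 ⊆ h.2 ∧ x ∈ h.1}}

/-- The hyperedges of `H[τ ∪ pa(τ)]` whose head is contained in `τ`. -/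
def HstarF (E : HEdges V) (τ : Set V) : HEdges V :=
  {h ∈ hInduced E (τ ∪ hPaTau E τ) | h.2 ⊆ τ}

/-- The hyperedges of a family whose underlying vertex sets are maximal under
set containment. -/
def maximalIn (E : HEdges V) : HEdges V :=
  {h ∈ E | ∀ h' ∈ E, h.1 ∪ h.2 ⊆ h'.1 ∪ h'.2 → h'.1 ∪ h'.2 = h.1 ∪ h.2}

/-- Descendants of `v` with respect to a parent relation. -/
def desc (par : V → V → Prop) (v : V) : Set V := {u | Relation.TransGen par v u}

/-- Non-descendants of `v`. -/
def ndOf (par : V → V → Prop) (v : V) : Set V := {u | u ∉ desc par v}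

/-- Adjacency with respect to neighbor/parent relations. -/
def adjOf (nbr par : V → V → Prop) (u v : V) : Prop := par u v ∨ par v u ∨ nbr u v

/-- Boundary of a vertex. -/
def bdOf (nbr par : V → V → Prop) (v : V) : Set V := {u | par u v} ∪ {u | nbr u v}

/-- Closure of a vertex. -/
def clOf (nbr par : V → V → Prop) (v : V) : Set V := bdOf nbr par v ∪ {v}

/-- `C` separates `A` and `B` in the undirected graph with pair set `U`:
every path from `A` to `B` meets `C`. -/
def Separates (U : Set (V × V)) (A B C : Set V) : Prop :=
  ∀ (n : ℕ) (f : Fin (n + 1) → V), f 0 ∈ A → f (Fin.last n) ∈ B →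
    (∀ i : Fin n, (f i.castSucc, f i.succ) ∈ U) → ∃ i, f i ∈ C

section Prob

variable [Fintype V] [DecidableEq V] {X : V → Type*} [∀ v, Fintype (X v)]

/-- `p` is a probability mass function. -/
def IsPMF (p : (∀ v, X v) → ℝ) : Prop := (∀ x, 0 ≤ p x) ∧ ∑ x, p x = 1

/-- Marginal of `p` on the coordinates in `S`, evaluated at `x`. -/
noncomputable def marginal (p : (∀ v, X v) → ℝ) (S : Set V) (x : ∀ v, X v) : ℝ :=
  ∑ y, Set.indicator {z : ∀ v, X v | ∀ v ∈ S, z v = x v} p y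

/-- Conditional independence `A ⟂ B | C` for the pmf `p`. -/
def CI (p : (∀ v, X v) → ℝ) (A B C : Set V) : Prop :=
  ∀ x, marginal p (A ∪ B ∪ C) x * marginal p C x
      = marginal p (A ∪ C) x * marginal p (B ∪ C) x

/-- The intersection property (S5). -/
def S5 (p : (∀ v, X v) → ℝ) : Prop :=
  ∀ A B C D : Set V, Disjoint A B → Disjoint A C → Disjoint A D →
    Disjoint B C → Disjoint B D → Disjoint C D →
    CI p A B (D ∪ C) → CI p A D (B ∪ C) → CI p A (B ∪ D) C

/-- Pairwise Markov property with respect to neighbor/parent relations. -/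
def PairwiseMarkov (nbr par : V → V → Prop) (p : (∀ v, X v) → ℝ) : Prop :=
  ∀ v u, v ≠ u → ¬ adjOf nbr par v u → u ∈ ndOf par v →
    CI p {v} {u} (ndOf par v \ {v, u})

/-- Local Markov property with respect to neighbor/parent relations. -/
def LocalMarkov (nbr par : V → V → Prop) (p : (∀ v, X v) → ℝ) : Prop :=
  ∀ v, CI p {v} (ndOf par v \ clOf nbr par v) (bdOf nbr par v)

/-- Global Markov property relative to a chain graph. -/
def GlobalMarkovG (E : Set (V × V)) (p : (∀ v, X v) → ℝ) : Prop :=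
  ∀ A B C : Set V, Disjoint A B → Disjoint A C → Disjoint B C →
    Separates (moral (gInduced E (gAnt E (A ∪ B ∪ C)))) A B C → CI p A B C

/-- Global Markov property relative to a directed hypergraph. -/
def GlobalMarkovH (E : HEdges V) (p : (∀ v, X v) → ℝ) : Prop :=
  ∀ A B C : Set V, Disjoint A B → Disjoint A C → Disjoint B C →
    Separates (moral (shadow (hInduced E (hAnt E (A ∪ B ∪ C))))) A B C → CI p A B C

/-- `f` depends only on the coordinates in `S`. -/
def DependsOn (f : (∀ v, X v) → ℝ) (S : Set V) : Prop :=
  ∀ x y, (∀ v ∈ S, x v = y v) → f x = f y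

/-- Conditional pmf `p(x_S | x_T)` as a ratio of marginals. -/
noncomputable def condM (p : (∀ v, X v) → ℝ) (S T : Set V) (x : ∀ v, X v) : ℝ :=
  marginal p (S ∪ T) x / marginal p T x

/-- Sum of `F` over the coordinates in `τ`, the remaining coordinates fixed at `x`. -/
noncomputable def sumOver (τ : Set V) (F : (∀ v, X v) → ℝ) (x : ∀ v, X v) : ℝ :=
  ∑ y, Set.indicator {z : ∀ v, X v | ∀ v, v ∉ τ → z v = x v} F y

/-- Factorization (CF) of a pmf according to a chain graph. -/
def FactorizesCG (E : Set (V × V)) (p : (∀ v, X v) → ℝ) : Prop :=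
  (∀ x, p x = ∏ᶠ τ ∈ gComps E, condM p τ (gPaTau E τ) x) ∧
  ∀ τ ∈ gComps E, ∃ ψ : Set V → (∀ v, X v) → ℝ,
    (∀ K ∈ maxCliques (moral (gInduced E (τ ∪ gPaTau E τ))),
      (∀ x, 0 ≤ ψ K x) ∧ DependsOn (ψ K) K) ∧
    ∀ x, condM p τ (gPaTau E τ) x
      = (∏ᶠ K ∈ maxCliques (moral (gInduced E (τ ∪ gPaTau E τ))), ψ K x) /
        sumOver τ (fun y => ∏ᶠ K ∈ maxCliques (moral (gInduced E (τ ∪ gPaTau E τ))), ψ K y) x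

/-- Factorization (HF) of a pmf according to a directed acyclic hypergraph. -/
def FactorizesBH (E : HEdges V) (p : (∀ v, X v) → ℝ) : Prop :=
  (∀ x, p x = ∏ᶠ τ ∈ hComps E, condM p τ (hPaTau E τ) x) ∧
  ∀ τ ∈ hComps E, ∃ ψ : Set V × Set V → (∀ v, X v) → ℝ,
    (∀ h ∈ maximalIn (HstarF E τ), (∀ x, 0 ≤ ψ h x) ∧ DependsOn (ψ h) (h.1 ∪ h.2)) ∧
    (∀ x, condM p τ (hPaTau E τ) x = ∏ᶠ h ∈ maximalIn (HstarF E τ), ψ h x) ∧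
    (∀ x, sumOver τ (fun y => ∏ᶠ h ∈ maximalIn (HstarF E τ), ψ h y) x = 1)

/-- Factorization of a pmf according to a chain graph with intervened set `A`. -/
def FactorizesCGInt (E : Set (V × V)) (A : Set V) (f : (∀ v, X v) → ℝ) : Prop :=
  (∀ x, f x = ∏ᶠ τ ∈ gComps E, condM f (τ \ A) (gPaTau E τ ∪ (τ ∩ A)) x) ∧
  ∀ τ ∈ gComps E, ∃ ψ : Set V → (∀ v, X v) → ℝ,
    (∀ K ∈ maxCliques (moral (gInduced E (τ ∪ gPaTau E τ))),
      (∀ x, 0 ≤ ψ K x) ∧ DependsOn (ψ K) K) ∧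
    ∀ x, condM f (τ \ A) (gPaTau E τ ∪ (τ ∩ A)) x
      = (∏ᶠ K ∈ maxCliques (moral (gInduced E (τ ∪ gPaTau E τ))), ψ K x) /
        sumOver (τ \ A)
          (fun y => ∏ᶠ K ∈ maxCliques (moral (gInduced E (τ ∪ gPaTau E τ))), ψ K y) x

/-- Factorization of a pmf according to a directed acyclic hypergraph with
intervened set `A`. -/
def FactorizesBHInt (E : HEdges V) (A : Set V) (f : (∀ v, X v) → ℝ) : Prop :=
  (∀ x, f x = ∏ᶠ τ ∈ hComps E, condM f (τ \ A) (hPaTau E τ ∪ (τ ∩ A)) x) ∧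
  ∀ τ ∈ hComps E, ∃ ψ : Set V × Set V → (∀ v, X v) → ℝ,
    (∀ h ∈ maximalIn (HstarF E τ), (∀ x, 0 ≤ ψ h x) ∧ DependsOn (ψ h) (h.1 ∪ h.2)) ∧
    ∀ x, condM f (τ \ A) (hPaTau E τ ∪ (τ ∩ A)) x
      = (∏ᶠ h ∈ maximalIn (HstarF E τ), ψ h x) /
        sumOver (τ \ A) (fun y => ∏ᶠ h ∈ maximalIn (HstarF E τ), ψ h y) x

/-- `f` is supported on configurations consistent with the intervention `x_A = a₀`. -/
def ConsistentWith (f : (∀ v, X v) → ℝ) (A : Set V) (a0 : ∀ v, X v) : Prop :=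
  ∀ x, f x ≠ 0 → ∀ v ∈ A, x v = a0 v

end Prob

end BH
section Statement0Aux

variable {V : Type*}

private def S0Step (nbr par : V → V → Prop) (a b : V) : Prop := nbr a b ∨ par a b

/-- A walk indexed by `Fin (m+1)` along relation `r`. -/
private def S0FW (r : V → V → Prop) (a b : V) : Prop :=
  ∃ m, ∃ g : Fin (m + 1) → V, g 0 = a ∧ g (Fin.last m) = b ∧
    ∀ i : Fin m, r (g i.castSucc) (g i.succ)

/-- A walk along `nbr ∨ par` with at least one `par` step. -/
private def S0FWP (nbr par : V → V → Prop) (a b : V) : Prop :=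
  ∃ m, ∃ g : Fin (m + 1) → V, g 0 = a ∧ g (Fin.last m) = b ∧
    (∀ i : Fin m, S0Step nbr par (g i.castSucc) (g i.succ)) ∧
    ∃ i : Fin m, par (g i.castSucc) (g i.succ)

private lemma s0_snoc_step {m : ℕ} {r : V → V → Prop} {g : Fin (m + 1) → V} {c : V}
    (hstep : ∀ i : Fin m, r (g i.castSucc) (g i.succ)) (hc : r (g (Fin.last m)) c) :
    ∀ i : Fin (m + 1), r ((Fin.snoc g c : Fin (m + 2) → V) i.castSucc)
      ((Fin.snoc g c : Fin (m + 2) → V) i.succ) := by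
  intro i
  rcases eq_or_lt_of_le (Fin.le_last i) with h | h
  · rw [h, Fin.snoc_castSucc, Fin.succ_last, Fin.snoc_last]
    exact hc
  · have hlt : (i : ℕ) < m := h
    have hij : i = (⟨(i : ℕ), hlt⟩ : Fin m).castSucc := by ext; rfl
    rw [hij, Fin.succ_castSucc, Fin.snoc_castSucc, Fin.snoc_castSucc]
    exact hstep _

private lemma s0_snoc_zero {m : ℕ} (g : Fin (m + 1) → V) (c : V) :
    (Fin.snoc g c : Fin (m + 2) → V) (0 : Fin (m + 2)) = g 0 := by
  rw [show (0 : Fin (m + 2)) = (0 : Fin (m + 1)).castSucc from rfl, Fin.snoc_castSucc]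

private lemma s0_fw_of_rtg {r : V → V → Prop} {a b : V}
    (h : Relation.ReflTransGen r a b) : S0FW r a b := by
  induction h with
  | refl => exact ⟨0, fun _ => a, rfl, rfl, fun i => i.elim0⟩
  | tail _ hbc ih =>
    obtain ⟨m, g, h0, hl, hs⟩ := ih
    refine ⟨m + 1, Fin.snoc g _, ?_, Fin.snoc_last .., s0_snoc_step hs (hl ▸ hbc)⟩
    rw [s0_snoc_zero]; exact h0

private lemma s0_fwp_of_fw_par {nbr par : V → V → Prop} {a b c : V}
    (h : S0FW (S0Step nbr par) a b) (hp : par b c) : S0FWP nbr par a c := by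
  obtain ⟨m, g, h0, hl, hs⟩ := h
  refine ⟨m + 1, Fin.snoc g c, ?_, Fin.snoc_last .., s0_snoc_step hs (Or.inr (hl ▸ hp)),
    Fin.last m, ?_⟩
  · rw [s0_snoc_zero]; exact h0
  · rw [Fin.snoc_castSucc, Fin.succ_last, Fin.snoc_last, hl]
    exact hp

private lemma s0_fwp_snoc {nbr par : V → V → Prop} {a b c : V}
    (h : S0FWP nbr par a b) (hc : S0Step nbr par b c) : S0FWP nbr par a c := by
  obtain ⟨m, g, h0, hl, hs, j, hj⟩ := h
  refine ⟨m + 1, Fin.snoc g c, ?_, Fin.snoc_last .., s0_snoc_step hs (hl ▸ hc),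
    j.castSucc, ?_⟩
  · rw [s0_snoc_zero]; exact h0
  · rw [Fin.succ_castSucc, Fin.snoc_castSucc, Fin.snoc_castSucc]
    exact hj

private lemma s0_fwp_append_rtg {nbr par : V → V → Prop} {a b c : V}
    (h : S0FWP nbr par a b) (hr : Relation.ReflTransGen (S0Step nbr par) b c) :
    S0FWP nbr par a c := by
  induction hr with
  | refl => exact h
  | tail _ hdc ih => exact s0_fwp_snoc ih hdc

private lemma s0_pdcycle_of_fwp {nbr par : V → V → Prop} {v : V}
    (h : S0FWP nbr par v v) : BH.PDCycle nbr par := by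
  obtain ⟨m, g, h0, hl, hs, j, hj⟩ := h
  match m, g, h0, hl, hs, j, hj with
  | 0, g, h0, hl, hs, j, hj => exact j.elim0
  | n + 1, g, h0, hl, hs, j, hj =>
    haveI : NeZero (n + 1) := ⟨Nat.succ_ne_zero n⟩
    set f : ZMod (n + 1) → V := fun z => g ⟨z.val, Nat.lt_succ_of_lt (ZMod.val_lt z)⟩
      with hf
    have hcyc : g 0 = g (Fin.last (n + 1)) := h0.trans hl.symm
    have hval : ∀ z : ZMod (n + 1), (z + 1).val = (z.val + 1) % (n + 1) := by
      intro z
      rw [ZMod.val_add, ZMod.val_one_eq_one_mod]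
      conv_rhs => rw [Nat.add_mod]
      rw [Nat.mod_eq_of_lt (ZMod.val_lt z)]
    have c1 : ∀ z : ZMod (n + 1),
        f z = g (⟨z.val, ZMod.val_lt z⟩ : Fin (n + 1)).castSucc := by
      intro z; apply congrArg g; ext; rfl
    have c2 : ∀ z : ZMod (n + 1),
        f (z + 1) = g (⟨z.val, ZMod.val_lt z⟩ : Fin (n + 1)).succ := by
      intro z
      by_cases hz : z.val = n
      · have h1 : (z + 1).val = 0 := by rw [hval, hz, Nat.mod_self]
        have h2 : f (z + 1) = g 0 := by
          apply congrArg g; ext; simp [h1]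
        rw [h2, hcyc]
        apply congrArg g; ext; simp [Fin.val_succ, hz, Fin.last]
      · have hlt : z.val + 1 < n + 1 :=
          Nat.lt_succ_of_le (Nat.succ_le_of_lt (lt_of_le_of_ne
            (Nat.lt_succ_iff.mp (ZMod.val_lt z)) hz))
        have h1 : (z + 1).val = z.val + 1 := by rw [hval, Nat.mod_eq_of_lt hlt]
        apply congrArg g; ext; simp [h1, Fin.val_succ]
    refine ⟨n, f, fun z => ?_, ?_⟩
    · rw [c1, c2]
      exact hs _
    · refine ⟨((j : ℕ) : ZMod (n + 1)), ?_⟩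
      have hjv : (((j : ℕ) : ZMod (n + 1))).val = (j : ℕ) :=
        ZMod.val_natCast_of_lt j.isLt
      have e1 : (⟨(((j : ℕ) : ZMod (n + 1))).val, ZMod.val_lt _⟩ : Fin (n + 1)) = j := by
        ext; exact hjv
      rw [c1, c2, e1]
      exact hj

end Statement0Aux

/-- The canonical DAG of a directed acyclic hypergraph: no hyperedge
has both its tail and its head meeting the same chain component (so there are no
self-loops), and the directed graph on the chain components, with an edge `τ₁ → τ₂`
exactly when `τ₁ ≠ τ₂` and some hyperedge has tail meeting `τ₁` and head meeting `τ₂`,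
contains no directed cycle. -/
theorem statement0 {V : Type*} [Fintype V] (E : BH.HEdges V)
    (hdisj : BH.HDisjoint E) (hacyc : BH.HAcyclic E) :
    (∀ h ∈ E, ∀ τ ∈ BH.hComps E, ¬ ((h.1 ∩ τ).Nonempty ∧ (h.2 ∩ τ).Nonempty)) ∧
    (∀ τ ∈ BH.hComps E,
      ¬ Relation.TransGen
        (fun τ₁ τ₂ => τ₁ ∈ BH.hComps E ∧ τ₂ ∈ BH.hComps E ∧ τ₁ ≠ τ₂ ∧
          ∃ h ∈ E, (h.1 ∩ τ₁).Nonempty ∧ (h.2 ∩ τ₂).Nonempty) τ τ) := by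
  have hsymm : Symmetric (BH.hNbr E) := by
    rintro u w ⟨h, hE, hu, hw, hne⟩
    exact ⟨h, hE, hw, hu, hne.symm⟩
  -- within a chain component, any two vertices are joined by a neighbor path
  have hcomp_rtg : ∀ τ ∈ BH.hComps E, ∀ a ∈ τ, ∀ b ∈ τ,
      Relation.ReflTransGen (BH.hNbr E) a b := by
    rintro τ ⟨v, rfl⟩ a ha b hb
    haveI : Std.Symm (BH.hNbr E) := ⟨hsymm⟩
    exact ((Std.Symm.symm (r := Relation.ReflTransGen (BH.hNbr E))) _ _ ha).trans hb
  have hcomp_rtg' : ∀ τ ∈ BH.hComps E, ∀ a ∈ τ, ∀ b ∈ τ,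
      Relation.ReflTransGen (S0Step (BH.hNbr E) (BH.hPar E)) a b := by
    intro τ hτ a ha b hb
    exact Relation.ReflTransGen.mono (fun _ _ h => Or.inl h) _ _ (hcomp_rtg τ hτ a ha b hb)
  constructor
  · rintro h hE τ hτ ⟨⟨u, hu1, hu2⟩, ⟨w, hw1, hw2⟩⟩
    have hpar : BH.hPar E u w := ⟨h, hE, hu1, hw1⟩
    exact hacyc (s0_pdcycle_of_fwp (s0_fwp_of_fw_par
      (s0_fw_of_rtg (hcomp_rtg' τ hτ w hw2 u hu2)) hpar))
  · intro τ hτ hcyc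
    set R := fun τ₁ τ₂ => τ₁ ∈ BH.hComps E ∧ τ₂ ∈ BH.hComps E ∧ τ₁ ≠ τ₂ ∧
      ∃ h ∈ E, (h.1 ∩ τ₁).Nonempty ∧ (h.2 ∩ τ₂).Nonempty with hR
    have key : ∀ σ ρ : Set V, Relation.TransGen R σ ρ →
        ∃ a ∈ σ, ∃ b ∈ ρ, S0FWP (BH.hNbr E) (BH.hPar E) a b := by
      intro σ ρ hsr
      induction hsr with
      | single hr =>
        obtain ⟨_, _, _, h, hE, ⟨a, ha1, ha2⟩, ⟨b, hb1, hb2⟩⟩ := hr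
        exact ⟨a, ha2, b, hb2, s0_fwp_of_fw_par
          ⟨0, fun _ => a, rfl, rfl, fun i => i.elim0⟩ ⟨h, hE, ha1, hb1⟩⟩
      | tail _ hr ih =>
        obtain ⟨a, ha, b, hb, hab⟩ := ih
        obtain ⟨hσ', _, _, h, hE, ⟨c, hc1, hc2⟩, ⟨d, hd1, hd2⟩⟩ := hr
        have hbc := hcomp_rtg' _ hσ' b hb c hc2
        exact ⟨a, ha, d, hd2,
          s0_fwp_snoc (s0_fwp_append_rtg hab hbc) (Or.inr ⟨h, hE, hc1, hd1⟩)⟩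
    obtain ⟨a, ha, b, hb, hab⟩ := key τ τ hcyc
    exact hacyc (s0_pdcycle_of_fwp
      (s0_fwp_append_rtg hab (hcomp_rtg' τ hτ b hb a ha)))
end

section
/- Let H be a directed acyclic hypergraph. Then the shadow ∂(H) of H is a chain graph, i.e., ∂(H) contains no partially directed cycle. -/
/-- The shadow of a directed acyclic hypergraph is a chain graph. -/
theorem statement1 {V : Type*} [Fintype V] (E : BH.HEdges V)
    (hdisj : BH.HDisjoint E) (hacyc : BH.HAcyclic E) :
    BH.IsChainGraph (BH.shadow E) := by
  intro hcyc
  apply hacyc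
  obtain ⟨n, f, hsteps, i, hpar⟩ := hcyc
  have mem_step : ∀ u v : V, (u, v) ∈ BH.shadow E →
      BH.hNbr E u v ∨ BH.hPar E u v := by
    intro u v hm
    obtain ⟨h, hE, hc⟩ := hm
    rcases hc with ⟨h1, h2, h3⟩ | ⟨h1, h2⟩
    · exact Or.inl ⟨h, hE, h1, h2, h3⟩
    · exact Or.inr ⟨h, hE, h1, h2⟩
  refine ⟨n, f, ?_, i, ?_⟩
  · intro j
    rcases hsteps j with hnb | hpa
    · exact mem_step _ _ hnb.1
    · exact mem_step _ _ hpa.1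
  · rcases mem_step _ _ hpar.1 with hnb | hpa
    · exfalso
      obtain ⟨h, hE, h1, h2, h3⟩ := hnb
      exact hpar.2 ⟨h, hE, Or.inl ⟨h2, h1, h3.symm⟩⟩
    · exact hpa
end

section
/- Let H be a directed acyclic hypergraph and G = ∂(H) its shadow. Then for every vertex v, the set of neighbors of v in G equals the set of neighbors of v in H, and the set of parents of v in G equals the set of parents of v in H. -/
/-- A two-vertex partially directed cycle: a parent step with any back step. -/
lemma cycle2 {V : Type*} {nbr par : V → V → Prop} {u v : V}
    (hp : par u v) (hb : nbr v u ∨ par v u) : BH.PDCycle nbr par := by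
  have key : ∀ j : ZMod 2, j ≠ 0 → j + 1 = 0 := by decide
  have h01 : ((0 : ZMod 2) + 1) ≠ 0 := by decide
  refine ⟨1, fun i => if i = 0 then u else v, ?_, ⟨0, ?_⟩⟩
  · intro i
    by_cases h : i = 0
    · subst h
      simpa [h01] using Or.inr hp
    · simpa [h, key i h] using hb
  · simpa [h01] using hp

/-- For every vertex `v`, the neighbors of `v` in the shadow of a
directed acyclic hypergraph coincide with its neighbors in the hypergraph, and
likewise for parents. -/
theorem statement2 {V : Type*} [Fintype V] (E : BH.HEdges V)
    (hdisj : BH.HDisjoint E) (hacyc : BH.HAcyclic E) :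
    ∀ v : V, BH.gNbSet (BH.shadow E) v = BH.hNbSet E v ∧
      BH.gPaSet (BH.shadow E) v = BH.hPaSet E v := by
  intro v
  have key : ∀ u w : V, ¬ (BH.hPar E u w ∧ ((u, w) ∈ BH.shadow E ∧ (w, u) ∈ BH.shadow E)) := by
    rintro u w ⟨hp, -, hs⟩
    obtain ⟨h, hE, hcase⟩ := hs
    apply hacyc
    rcases hcase with ⟨h1, h2, hne⟩ | ⟨h1, h2⟩
    · exact cycle2 hp (Or.inl ⟨h, hE, h1, h2, hne⟩)
    · exact cycle2 hp (Or.inr ⟨h, hE, h1, h2⟩)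
  have shadow_cases : ∀ u w : V, (u, w) ∈ BH.shadow E → BH.hNbr E u w ∨ BH.hPar E u w := by
    rintro u w ⟨h, hE, hcase⟩
    rcases hcase with ⟨h1, h2, hne⟩ | ⟨h1, h2⟩
    · exact Or.inl ⟨h, hE, h1, h2, hne⟩
    · exact Or.inr ⟨h, hE, h1, h2⟩
  have nbr_shadow : ∀ u w : V, BH.hNbr E u w → (u, w) ∈ BH.shadow E := by
    rintro u w ⟨h, hE, h1, h2, hne⟩
    exact ⟨h, hE, Or.inl ⟨h1, h2, hne⟩⟩
  have nbr_symm : ∀ u w : V, BH.hNbr E u w → BH.hNbr E w u := by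
    rintro u w ⟨h, hE, h1, h2, hne⟩
    exact ⟨h, hE, h2, h1, hne.symm⟩
  have par_shadow : ∀ u w : V, BH.hPar E u w → (u, w) ∈ BH.shadow E := by
    rintro u w ⟨h, hE, h1, h2⟩
    exact ⟨h, hE, Or.inr ⟨h1, h2⟩⟩
  constructor
  · ext u
    simp only [BH.gNbSet, BH.hNbSet, BH.gNbr, Set.mem_setOf_eq]
    constructor
    · rintro ⟨h1, h2⟩
      rcases shadow_cases u v h1 with hn | hp
      · exact hn
      · exact absurd ⟨hp, h1, h2⟩ (key u v)
    · intro hn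
      exact ⟨nbr_shadow u v hn, nbr_shadow v u (nbr_symm u v hn)⟩
  · ext u
    simp only [BH.gPaSet, BH.hPaSet, BH.gPar, Set.mem_setOf_eq]
    constructor
    · rintro ⟨h1, h2⟩
      rcases shadow_cases u v h1 with hn | hp
      · exact absurd (nbr_shadow v u (nbr_symm u v hn)) h2
      · exact hp
    · intro hp
      refine ⟨par_shadow u v hp, fun hs => ?_⟩
      rcases shadow_cases v u hs with hn | hp2
      · exact key u v ⟨hp, par_shadow u v hp, nbr_shadow v u hn⟩
      · apply hacyc
        exact cycle2 hp (Or.inr hp2)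
end

section
/- Let G be a chain graph and H its canonical LWF DAH. Then H is a directed acyclic hypergraph, i.e., H contains no partially directed cycle. -/
namespace BH

lemma canon_nbr {V : Type*} {E : Set (V × V)} {u v : V}
    (h : hNbr (canonicalLWF E) u v) : gNbr E u v := by
  obtain ⟨e, he, hu, hv, huv⟩ := h
  obtain ⟨τ, -, F, hF, ⟨g, hg⟩, h2, -⟩ := he
  have hgs : g ∈ phase1 E := (hF hg).1
  have hK : IsCliqueIn (uPart E) g.2 := by
    rcases hgs with ⟨w, K, hm, rfl⟩ | ⟨K, hm, -, rfl⟩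
    · exact hm.2.2.1
    · exact hm.2.2.1
  have hu' : u ∈ g.2 := by rw [h2] at hu; exact hu g hg
  have hv' : v ∈ g.2 := by rw [h2] at hv; exact hv g hg
  exact hK u hu' v hv' huv

lemma canon_par {V : Type*} {E : Set (V × V)} {u v : V}
    (h : hPar (canonicalLWF E) u v) : gPar E u v := by
  obtain ⟨e, he, hu, hv⟩ := h
  obtain ⟨τ, -, F, hF, hFne, h2, h1⟩ := he
  rw [h1] at hu
  obtain ⟨g, hg, hsub, hug⟩ := hu
  have hgs : g ∈ phase1 E := hg.1
  rcases hgs with ⟨w, K, hm, rfl⟩ | ⟨K, hm, -, rfl⟩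
  · simp only [Set.mem_singleton_iff] at hug
    subst hug
    exact hm.2.1 (hsub hv)
  · exact absurd hug (Set.notMem_empty u)

end BH

/-- The canonical LWF DAH of a chain graph is a directed acyclic
hypergraph, i.e., it contains no partially directed cycle. -/
theorem statement3 {V : Type*} [Fintype V] (E : Set (V × V))
    (hG : BH.IsChainGraph E) :
    BH.HAcyclic (BH.canonicalLWF E) := by
  rintro ⟨n, f, hstep, i, hi⟩
  exact hG ⟨n, f, fun j => (hstep j).imp BH.canon_nbr BH.canon_par,
    i, BH.canon_par hi⟩
end

section
/- Let G be a chain graph, H its canonical LWF DAH, and p a probability mass function on ∏_{v∈V} X_v. Then p is pairwise G-Markovian if and only if p is pairwise H-Markovian. -/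
namespace BH

variable {V : Type*}

lemma gNbr_symm' {E : Set (V × V)} {u v : V} (h : gNbr E u v) : gNbr E v u := ⟨h.2, h.1⟩

/-- Any clique inside `S` extends to a maximal clique within `S`. -/
lemma exists_maxClique [Finite V] (U : Set (V × V)) (S K₀ : Set V)
    (h0 : K₀.Nonempty) (hS : K₀ ⊆ S) (hc : IsCliqueIn U K₀) :
    ∃ K, K₀ ⊆ K ∧ IsMaxCliqueWithin U S K := by
  obtain ⟨K, hK, hmax⟩ := Set.Finite.exists_maximalFor (id : Set V → Set V)
    {K | K₀ ⊆ K ∧ K ⊆ S ∧ IsCliqueIn U K} (Set.toFinite _) ⟨K₀, subset_rfl, hS, hc⟩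
  exact ⟨K, hK.1, h0.mono hK.1, hK.2.1, hK.2.2,
    fun K' h1 h2 h3 => Set.Subset.antisymm (hmax (show K' ∈ {K | K₀ ⊆ K ∧ K ⊆ S ∧ IsCliqueIn U K} from ⟨hK.1.trans h1, h2, h3⟩) h1) h1⟩

/-- The head of every Phase-I hyperedge is a clique of the undirected part. -/
lemma head_clique {E : Set (V × V)} {h : Set V × Set V} (hh : h ∈ phase1 E) :
    IsCliqueIn (uPart E) h.2 := by
  rcases hh with ⟨v, K, hK, rfl⟩ | ⟨K, hK, -, rfl⟩ <;> exact hK.2.2.1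

/-- A clique containing `v` lies inside the chain component of `v`. -/
lemma clique_subset_comp {E : Set (V × V)} {K : Set V} (hc : IsCliqueIn (uPart E) K)
    {v : V} (hv : v ∈ K) : K ⊆ gComp E v := by
  intro x hx
  rcases eq_or_ne v x with rfl | hne
  · exact Relation.ReflTransGen.refl
  · exact Relation.ReflTransGen.single (hc v hv x hx hne)

lemma par_mem_gCl {E : Set (V × V)} {τ : Set V} {a w : V} (hw : w ∈ τ)
    (ha : gPar E a w) : a ∈ gCl E τ := by
  by_cases h : a ∈ τ
  · exact Or.inr h
  · exact Or.inl ⟨Set.mem_biUnion hw (Or.inl ha), h⟩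

/-- A Phase-I hyperedge whose head contains `v` belongs to `H*` of the chain
component of `v`. -/
lemma mem_HstarI {E : Set (V × V)} {h : Set V × Set V} (hh : h ∈ phase1 E)
    {v : V} (hv : v ∈ h.2) : h ∈ HstarI E (gComp E v) := by
  have hKτ : h.2 ⊆ gComp E v := clique_subset_comp (head_clique hh) hv
  refine ⟨hh, ?_, v, hv, hKτ hv⟩
  rintro x (hx | hx)
  · rcases hh with ⟨w, K, hK, rfl⟩ | ⟨K, hK, -, rfl⟩
    · have hxw : x = w := hx
      subst hxw
      exact par_mem_gCl Relation.ReflTransGen.refl (hK.2.1 hv)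
    · exact absurd hx (Set.notMem_empty x)
  · exact Or.inr (hKτ hx)

/-- From a single `H*` hyperedge we get a canonical LWF hyperedge with the same head. -/
lemma single_edge {E : Set (V × V)} {τ : Set V} (hτ : τ ∈ gComps E)
    {h : Set V × Set V} (hh : h ∈ HstarI E τ) :
    (({x | ∃ g ∈ HstarI E τ, h.2 ⊆ g.2 ∧ x ∈ g.1}, h.2) : Set V × Set V)
      ∈ canonicalLWF E := by
  refine ⟨τ, hτ, {h}, by simpa using hh, ⟨h, rfl⟩, ?_, rfl⟩
  ext x
  simp

lemma hPar_canonical_iff [Finite V] {E : Set (V × V)} (u v : V) :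
    hPar (canonicalLWF E) u v ↔ gPar E u v := by
  constructor
  · rintro ⟨e, ⟨τ, hτ, F, hF, hFne, h2, h1⟩, hu, hv⟩
    rw [h1] at hu
    obtain ⟨h, hh, hsub, hu1⟩ := hu
    rcases hh.1 with ⟨w, K, hK, rfl⟩ | ⟨K, hK, -, rfl⟩
    · have huw : u = w := hu1
      subst huw
      exact hK.2.1 (hsub hv)
    · exact absurd hu1 (Set.notMem_empty u)
  · intro huv
    obtain ⟨K, hvK, hK⟩ := exists_maxClique (uPart E) (children E u) {v}
      ⟨v, rfl⟩ (Set.singleton_subset_iff.mpr huv)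
      (by rintro a rfl b rfl hab; exact absurd rfl hab)
    have hp1 : (({u}, K) : Set V × Set V) ∈ phase1 E := Or.inl ⟨u, K, hK, rfl⟩
    have hvK' : v ∈ K := hvK rfl
    have hHs := mem_HstarI hp1 hvK'
    exact ⟨_, single_edge ⟨v, rfl⟩ hHs, ⟨({u}, K), hHs, subset_rfl, rfl⟩, hvK'⟩

lemma hNbr_canonical_iff [Finite V] {E : Set (V × V)} {u v : V} (hne : u ≠ v) :
    hNbr (canonicalLWF E) u v ↔ gNbr E u v := by
  constructor
  · rintro ⟨e, ⟨τ, hτ, F, hF, hFne, h2, h1⟩, hu, hv, -⟩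
    obtain ⟨g, hgF⟩ := hFne
    rw [h2] at hu hv
    exact head_clique (hF hgF).1 u (hu g hgF) v (hv g hgF) hne
  · intro huv
    obtain ⟨K, hsub, hK⟩ := exists_maxClique (uPart E) Set.univ {u, v}
      ⟨u, Or.inl rfl⟩ (Set.subset_univ _)
      (by
        rintro a (rfl | rfl) b (rfl | rfl) hab
        · exact absurd rfl hab
        · exact huv
        · exact gNbr_symm' huv
        · exact absurd rfl hab)
    have huK : u ∈ K := hsub (Or.inl rfl)
    have hvK : v ∈ K := hsub (Or.inr rfl)
    have hh : ∃ h : Set V × Set V, h ∈ phase1 E ∧ h.2 = K := by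
      by_cases hcase : ∃ h' ∈ phase1a E, K ⊆ h'.2
      · obtain ⟨h', hh', hKh'⟩ := hcase
        obtain ⟨w, K', hK', rfl⟩ := hh'
        have hKK' : K' = K := hK.2.2.2 K' hKh' (Set.subset_univ _) hK'.2.2.1
        exact ⟨({w}, K'), Or.inl ⟨w, K', hK', rfl⟩, hKK'⟩
      · refine ⟨(∅, K), Or.inr ⟨K, hK, ?_, rfl⟩, rfl⟩
        intro h' hh' hKh'
        exact hcase ⟨h', hh', hKh'⟩
    obtain ⟨h, hp1, hhK⟩ := hh
    have huh : u ∈ h.2 := hhK ▸ huK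
    have hvh : v ∈ h.2 := hhK ▸ hvK
    have hHs := mem_HstarI hp1 huh
    exact ⟨_, single_edge ⟨u, rfl⟩ hHs, huh, hvh, hne⟩

end BH

/-- A pmf is pairwise Markovian relative to a chain graph if and only
if it is pairwise Markovian relative to the canonical LWF DAH of the chain graph. -/
theorem statement8 {V : Type*} [Fintype V] [DecidableEq V]
    {X : V → Type*} [∀ v, Fintype (X v)]
    (E : Set (V × V)) (hG : BH.IsChainGraph E)
    (p : (∀ v, X v) → ℝ) (hp : BH.IsPMF p) :
    BH.PairwiseMarkov (BH.gNbr E) (BH.gPar E) p ↔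
      BH.PairwiseMarkov (BH.hNbr (BH.canonicalLWF E)) (BH.hPar (BH.canonicalLWF E)) p := by
  have hpar_eq : BH.hPar (BH.canonicalLWF E) = BH.gPar E := by
    funext u v
    exact propext (BH.hPar_canonical_iff u v)
  have hadj : ∀ v u : V, v ≠ u →
      (BH.adjOf (BH.hNbr (BH.canonicalLWF E)) (BH.hPar (BH.canonicalLWF E)) v u ↔
        BH.adjOf (BH.gNbr E) (BH.gPar E) v u) := by
    intro v u hvu
    simp only [BH.adjOf, hpar_eq]
    exact or_congr_right (or_congr_right (BH.hNbr_canonical_iff hvu))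
  constructor
  · intro hP v u hvu hna hnd
    rw [hpar_eq] at hnd ⊢
    exact hP v u hvu (fun ha => hna ((hadj v u hvu).mpr ha)) hnd
  · intro hP v u hvu hna hnd
    rw [← hpar_eq] at hnd
    have := hP v u hvu (fun ha => hna ((hadj v u hvu).mp ha)) hnd
    rwa [hpar_eq] at this
end
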